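/- (Hadamard's lemma for matrices) For X, Y ∈ ℝ^{d×d}, the conjugation e^X Y e^{-X} equals the convergent series ∑_{n=0}^∞ {X,Y}_n / n!, where {X,Y}_n is the n-fold iterated commutator. -/

import Mathlib

set_option maxHeartbeats 1000000

open Matrix NormedSpace

attribute [local instance] Matrix.linftyOpNormedRing Matrix.linftyOpNormedAlgebra

/-- The iterated commutator `{X,Y}ₙ`. -/
def itComm {d : ℕ} (X : Matrix (Fin d) (Fin d) ℝ) : Matrix (Fin d) (Fin d) ℝ → ℕ →
    Matrix (Fin d) (Fin d) ℝ
  | Y, 0 => Y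
  | Y, n + 1 => X * itComm X Y n - itComm X Y n * X

/-- `exp_add_of_commute`, with instance arguments resolved by synthesis. -/
lemma myexp_add {𝔸 : Type*} [NormedRing 𝔸] [NormedAlgebra ℝ 𝔸] [CompleteSpace 𝔸]
    (a b : 𝔸) (h : a * b = b * a) : exp (a + b) = exp a * exp b :=
  letI : NormedAlgebra ℚ 𝔸 := NormedAlgebra.restrictScalars ℚ ℝ 𝔸
  NormedSpace.exp_add_of_commute h

/-- The operator-norm ring structure on linear maps of matrices. -/
noncomputable instance instNormedRingMatCLM {d : ℕ} :
    NormedRing (Matrix (Fin d) (Fin d) ℝ →L[ℝ] Matrix (Fin d) (Fin d) ℝ) :=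
  ContinuousLinearMap.toNormedRing

/-- The operator-norm algebra structure on linear maps of matrices. -/
noncomputable instance instNormedAlgebraMatCLM {d : ℕ} :
    NormedAlgebra ℝ (Matrix (Fin d) (Fin d) ℝ →L[ℝ] Matrix (Fin d) (Fin d) ℝ) :=
  ContinuousLinearMap.toNormedAlgebra

/-- Linear maps of matrices form a topological ring. -/
instance instIsTopologicalRingMatCLM {d : ℕ} :
    IsTopologicalRing (Matrix (Fin d) (Fin d) ℝ →L[ℝ] Matrix (Fin d) (Fin d) ℝ) :=
  NonUnitalSeminormedRing.toIsTopologicalRing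

/-- Linear maps of matrices form a complete space. -/
instance instCompleteSpaceMatCLM {d : ℕ} :
    @CompleteSpace (Matrix (Fin d) (Fin d) ℝ →L[ℝ] Matrix (Fin d) (Fin d) ℝ)
      (@PseudoMetricSpace.toUniformSpace _ (@SeminormedRing.toPseudoMetricSpace _
        (@NormedRing.toSeminormedRing _ instNormedRingMatCLM))) := by
  have : SequentialSpace (Matrix (Fin d) (Fin d) ℝ) :=
    inferInstanceAs (SequentialSpace (Fin d → Fin d → ℝ))
  exact ContinuousLinearMap.instCompleteSpace

section aux
variable {d : ℕ}
local notation "A" => Matrix (Fin d) (Fin d) ℝ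

/-- Left multiplication as a continuous linear map. -/
noncomputable def mL (B : A) : (A →L[ℝ] A) := ContinuousLinearMap.mul ℝ A B

/-- Right multiplication as a continuous linear map. -/
noncomputable def mR (B : A) : (A →L[ℝ] A) := (ContinuousLinearMap.mul ℝ A).flip B

@[simp] lemma mL_apply (B C : A) : mL B C = B * C := rfl
@[simp] lemma mR_apply (B C : A) : mR B C = C * B := rfl

lemma mL_pow_apply (B C : A) (n : ℕ) : ((mL B) ^ n) C = B ^ n * C := by
  induction n with
  | zero => simp
  | succ n ih => rw [pow_succ', ContinuousLinearMap.mul_apply, ih,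
      mL_apply, pow_succ', mul_assoc]

lemma mR_pow_apply (B C : A) (n : ℕ) : ((mR B) ^ n) C = C * B ^ n := by
  induction n with
  | zero => simp
  | succ n ih => rw [pow_succ', ContinuousLinearMap.mul_apply, ih,
      mR_apply, pow_succ, mul_assoc]

lemma exp_mL_apply (B C : A) : exp (mL B) C = exp B * C := by
  have h1 : HasSum (fun n : ℕ => ((((n.factorial : ℝ))⁻¹ • (mL B) ^ n) C))
      (exp (mL B) C) := (exp_series_hasSum_exp' (𝕂 := ℝ) (mL B)).mapL
    (ContinuousLinearMap.apply ℝ A C)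
  have h2 := (exp_series_hasSum_exp' (𝕂 := ℝ) B).mapL (mR C)
  simp only [ContinuousLinearMap.apply_apply, ContinuousLinearMap.smul_apply, mL_pow_apply] at h1
  simp only [_root_.map_smul, mR_apply] at h2
  exact h1.unique h2

lemma exp_mR_apply (B C : A) : exp (mR B) C = C * exp B := by
  have h1 : HasSum (fun n : ℕ => ((((n.factorial : ℝ))⁻¹ • (mR B) ^ n) C))
      (exp (mR B) C) := (exp_series_hasSum_exp' (𝕂 := ℝ) (mR B)).mapL
    (ContinuousLinearMap.apply ℝ A C)
  have h2 := (exp_series_hasSum_exp' (𝕂 := ℝ) B).mapL (mL C)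
  simp only [ContinuousLinearMap.apply_apply, ContinuousLinearMap.smul_apply, mR_pow_apply] at h1
  simp only [_root_.map_smul, mL_apply] at h2
  exact h1.unique h2

end aux

theorem hadamard_lemma {d : ℕ} (X Y : Matrix (Fin d) (Fin d) ℝ) :
    HasSum (fun n : ℕ => ((Nat.factorial n : ℝ))⁻¹ • itComm X Y n)
      (exp X * Y * exp (-X)) := by
  have hAd : ∀ n, ((mL X - mR X) ^ n) Y = itComm X Y n := by
    intro n
    induction n with
    | zero => simp [itComm]
    | succ n ih =>
      rw [pow_succ', ContinuousLinearMap.mul_apply, ih]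
      simp [itComm]
  have h1 : HasSum (fun n : ℕ => ((((n.factorial : ℝ))⁻¹ • (mL X - mR X) ^ n) Y))
      (exp (mL X - mR X) Y) := (exp_series_hasSum_exp' (𝕂 := ℝ) (mL X - mR X)).mapL
    (ContinuousLinearMap.apply ℝ (Matrix (Fin d) (Fin d) ℝ) Y)
  have key : exp (mL X - mR X) Y = exp X * Y * exp (-X) := by
    have hc : mL X * (-(mR X)) = (-(mR X)) * mL X := by
      ext Z
      simp [mul_assoc]
    have hsplit : exp (mL X + -(mR X)) = exp (mL X) * exp (-(mR X)) :=
      myexp_add (mL X) (-(mR X)) hc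
    rw [sub_eq_add_neg]
    have hnegR : -(mR X) = mR (-X) := by ext Z; simp
    rw [hsplit, ContinuousLinearMap.mul_apply, hnegR, exp_mR_apply, exp_mL_apply, mul_assoc]
  simp only [ContinuousLinearMap.smul_apply, ContinuousLinearMap.apply_apply, _root_.map_smul,
    hAd] at h1
  rw [key] at h1
  exact h1
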